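/- Let d ≥ 2 be an even integer and Θ = (X₁,X₂) a d-small symbol with defining intervals, right region in row r, left region in row l = 3 − r, and middle region of cardinality kd. Let w be the number of letters ∧ and h the number of letters ∨ in w_ud(Θ). Then the following are equivalent: (i) w_ud(Θ) = ×^α ∧^w ∨^h ∘^β for some α, β ≥ 0 (all ×'s first, then all ∧'s, then all ∨'s, then all ∘'s); (ii) λ(X_r) is the empty partition, λ(X_l) is the rectangular partition with h parts all equal to w, and s(X_r) = s(X_l) + w − h + kd + d/2. -/
import Mathlib


open scoped Classical

/-- A β-set: a set of integers containing all sufficiently small integers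
and no sufficiently large ones. -/
def IsBetaSet (X : Set ℤ) : Prop :=
  (∃ c : ℤ, ∀ z : ℤ, z < c → z ∈ X) ∧ (∃ C : ℤ, ∀ z : ℤ, C ≤ z → z ∉ X)

/-- `topB X = max X`. -/
noncomputable def topB (X : Set ℤ) : ℤ := sSup X

/-- `botB X = max {z | every integer < z lies in X}`. -/
noncomputable def botB (X : Set ℤ) : ℤ := sSup {z : ℤ | ∀ w : ℤ, w < z → w ∈ X}

/-- The charge `s(X)` of a β-set `X`, computed with the cutoff `c = botB X`. -/
noncomputable def chargeB (X : Set ℤ) : ℤ :=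
  ((X ∩ Set.Ici (botB X)).ncard : ℤ) + botB X - 1

/-- `elemSeq X j` is the `(j+1)`-st largest element of the β-set `X`. -/
noncomputable def elemSeq (X : Set ℤ) : ℕ → ℤ
  | 0 => sSup X
  | n + 1 => sSup (X ∩ Set.Iio (elemSeq X n))

/-- The partition `λ(X)` of a β-set `X`, `0`-indexed: `partB X j = λ_{j+1}`,
recovered from `x_j = s(X) + λ_j - j + 1` where `x_j` is the `j`-th largest element. -/
noncomputable def partB (X : Set ℤ) (j : ℕ) : ℕ :=
  (elemSeq X j - chargeB X + j).toNat

/-- The size `|λ(X)|` of the partition of a β-set `X`. -/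
noncomputable def sizeB (X : Set ℤ) : ℕ := ∑ᶠ j : ℕ, partB X j

/-- A partition, encoded as a weakly decreasing eventually zero function (0-indexed). -/
def IsPartition (μ : ℕ → ℕ) : Prop :=
  (∀ j, μ (j + 1) ≤ μ j) ∧ ∃ N, ∀ j, N ≤ j → μ j = 0

/-- The β-set `{s + λ_j - j + 1 : j ≥ 1}` of the partition `μ` with charge `s`. -/
def betaOf (μ : ℕ → ℕ) (s : ℤ) : Set ℤ :=
  {x : ℤ | ∃ j : ℕ, x = s + (μ j : ℤ) - (j : ℤ)}

/-- The symbol `Θ = (X₁, X₂)` is `d`-small with defining intervals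
`I₁ = [a₁,b₁]` and `I₂ = [a₂,b₂]`. -/
structure IsDSmallWith (d : ℤ) (X₁ X₂ : Set ℤ) (a₁ b₁ a₂ b₂ : ℤ) : Prop where
  len₁ : b₁ - a₁ = d / 2 - 1
  len₂ : b₂ - a₂ = d / 2 - 1
  bot₁ : a₁ ≤ botB X₁
  bot₂ : a₂ ≤ botB X₂
  top₁ : topB X₁ ≤ b₁
  top₂ : topB X₂ ≤ b₂
  cong : d ∣ b₂ - (b₁ + d / 2)

/-- The symbol `Θ = (X₁, X₂)` is `d`-small: it admits some pair of defining intervals. -/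
def IsDSmall (d : ℤ) (X₁ X₂ : Set ℤ) : Prop :=
  ∃ a₁ b₁ a₂ b₂ : ℤ, IsDSmallWith d X₁ X₂ a₁ b₁ a₂ b₂

/-- The row (`1` or `2`) containing the right region. -/
def rightRow (b₁ b₂ : ℤ) : ℕ := if b₁ < b₂ then 2 else 1

/-- The row, as a β-set, containing the right region. -/
def rightSet (X₁ X₂ : Set ℤ) (b₁ b₂ : ℤ) : Set ℤ := if b₁ < b₂ then X₂ else X₁

/-- The row, as a β-set, containing the left region. -/
def leftSet (X₁ X₂ : Set ℤ) (b₁ b₂ : ℤ) : Set ℤ := if b₁ < b₂ then X₁ else X₂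

/-- The cardinality `kd` of the middle region. -/
def middleLen (d b₁ b₂ : ℤ) : ℤ := |b₂ - b₁| - d / 2

/-- The alphabet `{∧, ∨, ×, ∘}` of up-down diagrams: `up = ∧`, `dn = ∨`,
`cross = ×`, `circ = ∘`. -/
inductive UD : Type
  | up
  | dn
  | cross
  | circ
deriving DecidableEq

/-- The up-down diagram `w_ud(Θ)` of a `d`-small symbol with defining intervals:
`wud d X₁ X₂ b₁ b₂ i` is the letter `w_i` for `1 ≤ i ≤ d/2`.  Here the right
region is `[m+1, m+d/2]` with `m = max b₁ b₂ - d/2`, `β_i = m + i`, and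
`β_i - kd - d/2 = β_i - |b₂ - b₁|`. -/
noncomputable def wud (d : ℤ) (X₁ X₂ : Set ℤ) (b₁ b₂ : ℤ) (i : ℤ) : UD :=
  if (max b₁ b₂ - d / 2 + i) ∈ rightSet X₁ X₂ b₁ b₂ then
    if (max b₁ b₂ - d / 2 + i) - |b₂ - b₁| ∈ leftSet X₁ X₂ b₁ b₂ then UD.cross else UD.up
  else
    if (max b₁ b₂ - d / 2 + i) - |b₂ - b₁| ∈ leftSet X₁ X₂ b₁ b₂ then UD.dn else UD.circ

/-- Removing an `e`-cohook in row `1` (the rows get interchanged afterwards). -/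
def RemoveCohookRow1 (e : ℤ) (Θ Θ' : Set ℤ × Set ℤ) : Prop :=
  ∃ x : ℤ, x ∈ Θ.1 ∧ x - e ∉ Θ.2 ∧ Θ' = (Θ.2 ∪ {x - e}, Θ.1 \ {x})

/-- Removing an `e`-cohook in row `2` (the rows get interchanged afterwards). -/
def RemoveCohookRow2 (e : ℤ) (Θ Θ' : Set ℤ × Set ℤ) : Prop :=
  ∃ x : ℤ, x ∈ Θ.2 ∧ x - e ∉ Θ.1 ∧ Θ' = (Θ.2 \ {x}, Θ.1 ∪ {x - e})

/-- Removing an `e`-cohook. -/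
def RemoveCohook (e : ℤ) (Θ Θ' : Set ℤ × Set ℤ) : Prop :=
  RemoveCohookRow1 e Θ Θ' ∨ RemoveCohookRow2 e Θ Θ'

/-- The symbol `Θ` has an `e`-cohook. -/
def HasCohook (e : ℤ) (Θ : Set ℤ × Set ℤ) : Prop :=
  (∃ x : ℤ, x ∈ Θ.1 ∧ x - e ∉ Θ.2) ∨ (∃ x : ℤ, x ∈ Θ.2 ∧ x - e ∉ Θ.1)

/-- `C` is an `e`-cocore of `Θ`: a symbol with no `e`-cohooks obtained from `Θ`
by a finite sequence of `e`-cohook removals. -/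
def IsCocoreOf (e : ℤ) (Θ C : Set ℤ × Set ℤ) : Prop :=
  Relation.ReflTransGen (RemoveCohook e) Θ C ∧ ¬ HasCohook e C

/-- The `n`-fold composition of a relation. -/
def RelPow {α : Type*} (R : α → α → Prop) : ℕ → α → α → Prop
  | 0 => Eq
  | n + 1 => fun a c => ∃ b, R a b ∧ RelPow R n b c

/-- `(a, b)` (row `a`, column `b`, both `1`-indexed) is a box of the partition `μ`
(`μ` is `0`-indexed, so `μ (a-1)` is the `a`-th part `λ_a`). -/
def IsBox (μ : ℕ → ℕ) (a b : ℕ) : Prop := 1 ≤ a ∧ 1 ≤ b ∧ b ≤ μ (a - 1)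

/-- `(a, b)` is an addable box of `μ`: adjoining it yields a partition. -/
def IsAddableBox (μ : ℕ → ℕ) (a b : ℕ) : Prop :=
  1 ≤ a ∧ b = μ (a - 1) + 1 ∧ (a = 1 ∨ b ≤ μ (a - 2))

/-- `(a, b)` is a removable box of `μ`: deleting it yields a partition. -/
def IsRemovableBox (μ : ℕ → ℕ) (a b : ℕ) : Prop :=
  1 ≤ a ∧ b = μ (a - 1) ∧ 1 ≤ b ∧ μ a < b

/-- The charged content `t + b - a` of the box in row `a` and column `b`,
with respect to the charge `t`. -/
def chCont (t : ℤ) (a b : ℕ) : ℤ := t + (b : ℤ) - (a : ℤ)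

/-- Selecting the component `j ∈ {1, 2}` of a bipartition. -/
def compPart (μ₁ μ₂ : ℕ → ℕ) (j : ℕ) : ℕ → ℕ := if j = 1 then μ₁ else μ₂

/-- Selecting the component `j ∈ {1, 2}` of a pair of charges. -/
def compT (t₁ t₂ : ℤ) (j : ℕ) : ℤ := if j = 1 then t₁ else t₂

/-- The box `(a, b)` in component `j` is a good removable `i`-box of the
bipartition `(μ₁, μ₂)` with charges `(t₁, t₂)`, where `r` is the row containing
the right region: it is a removable box of charged content `≡ i (mod d)` and
there is no addable box `A` of either component with charged content `≡ i (mod d)`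
such that either `A` has strictly larger charged content, or `A` has equal
charged content and lies in component `r`. -/
def IsGoodRemovableBox (d : ℤ) (μ₁ μ₂ : ℕ → ℕ) (t₁ t₂ : ℤ) (r : ℕ) (i : ℤ)
    (j a b : ℕ) : Prop :=
  (j = 1 ∨ j = 2) ∧ IsRemovableBox (compPart μ₁ μ₂ j) a b ∧
    d ∣ chCont (compT t₁ t₂ j) a b - i ∧
    ∀ j' a' b' : ℕ, (j' = 1 ∨ j' = 2) → IsAddableBox (compPart μ₁ μ₂ j') a' b' →
      d ∣ chCont (compT t₁ t₂ j') a' b' - i →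
      ¬ (chCont (compT t₁ t₂ j) a b < chCont (compT t₁ t₂ j') a' b' ∨
        (chCont (compT t₁ t₂ j') a' b' = chCont (compT t₁ t₂ j) a b ∧ j' = r))

/-- The position of a letter in the order `× < ∧ < ∨ < ∘`. -/
def udIdx : UD → ℕ
  | UD.cross => 0
  | UD.up => 1
  | UD.dn => 2
  | UD.circ => 3

/-- The word `w₁ ⋯ w_{d/2}` reads `×^α ∧^w ∨^h ∘^β`: all `×`'s first, then all
`∧`'s, then all `∨`'s, then all `∘`'s. -/
def SortedUD (d : ℤ) (w : ℤ → UD) : Prop :=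
  ∀ i j : ℤ, 1 ≤ i → i ≤ j → j ≤ d / 2 → udIdx (w i) ≤ udIdx (w j)

/-- The number of occurrences of the letter `u` in the word `w₁ ⋯ w_{d/2}`. -/
noncomputable def countUD (d : ℤ) (w : ℤ → UD) (u : UD) : ℕ :=
  ((Finset.Icc (1 : ℤ) (d / 2)).filter fun i => w i = u).card

/-- `w'` is obtained from `w` by permuting the letters `∧` and `∨` among the
positions carrying `∧` or `∨`, leaving every `×` and `∘` in place. -/
def PermUpDn (d : ℤ) (w w' : ℤ → UD) : Prop :=
  (∀ i : ℤ, 1 ≤ i → i ≤ d / 2 →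
    ((w' i = UD.cross ↔ w i = UD.cross) ∧ (w' i = UD.circ ↔ w i = UD.circ))) ∧
  countUD d w' UD.up = countUD d w UD.up

/-- Replace every letter `∧` by `∨`, leaving the other letters unchanged. -/
def replaceUp : UD → UD
  | UD.up => UD.dn
  | u => u
namespace Stmt3Aux

open Set

lemma int_sSup_eq {S : Set ℤ} {mx : ℤ} (hm : mx ∈ S) (hub : ∀ x ∈ S, x ≤ mx) :
    sSup S = mx :=
  le_antisymm (csSup_le ⟨mx, hm⟩ hub) (le_csSup ⟨mx, hub⟩ hm)

lemma ncard_Icc_int (a b : ℤ) : (Set.Icc a b).ncard = (b + 1 - a).toNat := by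
  rw [← Finset.coe_Icc, Set.ncard_coe_finset, Int.card_Icc]

section Beta
variable {X : Set ℤ}

lemma beta_ne (hX : IsBetaSet X) : X.Nonempty := by
  obtain ⟨c, hc⟩ := hX.1; exact ⟨c - 1, hc _ (by omega)⟩

lemma beta_bdd (hX : IsBetaSet X) : BddAbove X := by
  obtain ⟨C, hC⟩ := hX.2
  refine ⟨C, fun x hx => ?_⟩
  by_contra hcon
  exact hC x (by omega) hx

lemma inter_Iio_ne (hX : IsBetaSet X) (t : ℤ) : (X ∩ Set.Iio t).Nonempty := by
  obtain ⟨c, hc⟩ := hX.1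
  exact ⟨min c t - 1, hc _ (by omega), by simp only [Set.mem_Iio]; omega⟩

lemma inter_Iio_bdd (hX : IsBetaSet X) (t : ℤ) : BddAbove (X ∩ Set.Iio t) :=
  BddAbove.mono Set.inter_subset_left (beta_bdd hX)

lemma elemSeq_succ_mem (hX : IsBetaSet X) (n : ℕ) :
    elemSeq X (n + 1) ∈ X ∩ Set.Iio (elemSeq X n) := by
  have := Int.csSup_mem (inter_Iio_ne hX (elemSeq X n)) (inter_Iio_bdd hX _)
  simpa [elemSeq] using this

lemma elemSeq_mem (hX : IsBetaSet X) : ∀ n, elemSeq X n ∈ X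
  | 0 => by simpa [elemSeq] using Int.csSup_mem (beta_ne hX) (beta_bdd hX)
  | n + 1 => (elemSeq_succ_mem hX n).1

lemma elemSeq_lt (hX : IsBetaSet X) (n : ℕ) : elemSeq X (n + 1) < elemSeq X n :=
  (elemSeq_succ_mem hX n).2

lemma le_elemSeq_zero (hX : IsBetaSet X) {x : ℤ} (hx : x ∈ X) : x ≤ elemSeq X 0 := by
  show x ≤ sSup X
  exact le_csSup (beta_bdd hX) hx

lemma le_elemSeq_succ (hX : IsBetaSet X) {x : ℤ} (hx : x ∈ X) (n : ℕ)
    (h : x < elemSeq X n) : x ≤ elemSeq X (n + 1) := by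
  show x ≤ sSup (X ∩ Set.Iio (elemSeq X n))
  exact le_csSup (inter_Iio_bdd hX _) ⟨hx, h⟩

lemma elemSeq_le (hX : IsBetaSet X) (n : ℕ) : elemSeq X n ≤ elemSeq X 0 - n := by
  induction n with
  | zero => simp
  | succ n ih => have := elemSeq_lt hX n; push_cast; push_cast at ih; omega

lemma elemSeq_surj (hX : IsBetaSet X) {x : ℤ} (hx : x ∈ X) : ∃ n, elemSeq X n = x := by
  have hex : ∃ n : ℕ, elemSeq X n ≤ x := by
    refine ⟨(elemSeq X 0 - x).toNat, ?_⟩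
    have := elemSeq_le hX (elemSeq X 0 - x).toNat
    omega
  have h1 : elemSeq X (Nat.find hex) ≤ x := Nat.find_spec hex
  cases h : Nat.find hex with
  | zero =>
    rw [h] at h1
    exact ⟨0, le_antisymm h1 (le_elemSeq_zero hX hx)⟩
  | succ k =>
    have h2 : ¬ elemSeq X k ≤ x := Nat.find_min hex (by omega)
    rw [h] at h1
    exact ⟨k + 1, le_antisymm h1 (le_elemSeq_succ hX hx k (by omega))⟩

lemma inter_Ioi_finite (hX : IsBetaSet X) (t : ℤ) : (X ∩ Set.Ioi t).Finite := by
  refine (Set.finite_Icc (t + 1) (elemSeq X 0)).subset ?_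
  rintro x ⟨hx1, hx2⟩
  have := le_elemSeq_zero hX hx1
  simp only [Set.mem_Ioi] at hx2
  simp only [Set.mem_Icc]; omega

lemma inter_Ici_finite (hX : IsBetaSet X) (t : ℤ) : (X ∩ Set.Ici t).Finite := by
  have : X ∩ Set.Ici t ⊆ X ∩ Set.Ioi (t - 1) := by
    rintro x ⟨hx1, hx2⟩
    simp only [Set.mem_Ici] at hx2
    exact ⟨hx1, by simp only [Set.mem_Ioi]; omega⟩
  exact (inter_Ioi_finite hX (t - 1)).subset this

lemma ncard_Ioi_elemSeq (hX : IsBetaSet X) (n : ℕ) :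
    (X ∩ Set.Ioi (elemSeq X n)).ncard = n := by
  induction n with
  | zero =>
    have he : X ∩ Set.Ioi (elemSeq X 0) = ∅ := by
      ext x
      simp only [Set.mem_inter_iff, Set.mem_Ioi, Set.mem_empty_iff_false, iff_false, not_and,
        not_lt]
      exact fun hx => le_elemSeq_zero hX hx
    rw [he]; simp
  | succ n ih =>
    have hset : X ∩ Set.Ioi (elemSeq X (n + 1))
        = insert (elemSeq X n) (X ∩ Set.Ioi (elemSeq X n)) := by
      ext x
      simp only [Set.mem_inter_iff, Set.mem_Ioi, Set.mem_insert_iff]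
      constructor
      · rintro ⟨hxX, hgt⟩
        rcases lt_trichotomy x (elemSeq X n) with hc | hc | hc
        · have := le_elemSeq_succ hX hxX n hc; omega
        · exact Or.inl hc
        · exact Or.inr ⟨hxX, hc⟩
      · rintro (rfl | ⟨hxX, hc⟩)
        · exact ⟨elemSeq_mem hX n, elemSeq_lt hX n⟩
        · exact ⟨hxX, (elemSeq_lt hX n).trans hc⟩
    rw [hset, Set.ncard_insert_of_notMem (by simp) (inter_Ioi_finite hX _), ih]

lemma botB_spec (hX : IsBetaSet X) : ∀ x < botB X, x ∈ X := by
  obtain ⟨c, hc⟩ := hX.1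
  have hne : ({z : ℤ | ∀ w : ℤ, w < z → w ∈ X}).Nonempty := ⟨c, hc⟩
  have hbdd : BddAbove {z : ℤ | ∀ w : ℤ, w < z → w ∈ X} := by
    refine ⟨elemSeq X 0 + 1, fun z hz => ?_⟩
    by_contra hcon
    have h1 : elemSeq X 0 + 1 ∈ X := hz _ (by omega)
    have := le_elemSeq_zero hX h1
    omega
  exact Int.csSup_mem hne hbdd

lemma botB_eq {c : ℤ} (h1 : ∀ x < c, x ∈ X) (h2 : c ∉ X) : botB X = c := by
  refine int_sSup_eq h1 fun z hz => ?_
  by_contra hcon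
  exact h2 (hz c (by omega))

lemma chargeB_cutoff (hX : IsBetaSet X) {c : ℤ} (h1 : ∀ x < c, x ∈ X) :
    chargeB X = ((X ∩ Set.Ici c).ncard : ℤ) + c - 1 := by
  have hbm : ∀ x < botB X, x ∈ X := botB_spec hX
  have hcb : c ≤ botB X := by
    refine le_csSup ?_ h1
    obtain ⟨C, hC⟩ := hX.2
    refine ⟨C + 1, fun z hz => ?_⟩
    by_contra hcon
    exact hC C le_rfl (hz C (by omega))
  have hsplit : X ∩ Set.Ici c = (X ∩ Set.Ici (botB X)) ∪ Set.Icc c (botB X - 1) := by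
    ext x
    simp only [Set.mem_inter_iff, Set.mem_Ici, Set.mem_union, Set.mem_Icc]
    constructor
    · rintro ⟨hx1, hx2⟩
      rcases le_or_gt (botB X) x with hc2 | hc2
      · exact Or.inl ⟨hx1, hc2⟩
      · exact Or.inr ⟨hx2, by omega⟩
    · rintro (⟨hx1, hx2⟩ | ⟨hx1, hx2⟩)
      · exact ⟨hx1, by omega⟩
      · exact ⟨hbm x (by omega), hx1⟩
  have hdisj : Disjoint (X ∩ Set.Ici (botB X)) (Set.Icc c (botB X - 1)) := by
    rw [Set.disjoint_left]
    rintro x ⟨_, hx⟩ hx2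
    simp only [Set.mem_Ici] at hx
    simp only [Set.mem_Icc] at hx2
    omega
  have hcard := Set.ncard_union_eq hdisj (inter_Ici_finite hX _) (Set.finite_Icc _ _)
  rw [hsplit] at *
  rw [hcard, ncard_Icc_int]
  unfold chargeB
  omega

lemma charge_le_elemSeq (hX : IsBetaSet X) (n : ℕ) : chargeB X - n ≤ elemSeq X n := by
  have hcount := ncard_Ioi_elemSeq hX n
  have hbm : ∀ x < botB X, x ∈ X := botB_spec hX
  rcases lt_or_ge (elemSeq X n) (botB X) with hcase | hcase
  · have hsplit : X ∩ Set.Ioi (elemSeq X n)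
        = (X ∩ Set.Ici (botB X)) ∪ Set.Icc (elemSeq X n + 1) (botB X - 1) := by
      ext x
      simp only [Set.mem_inter_iff, Set.mem_Ioi, Set.mem_union, Set.mem_Ici, Set.mem_Icc]
      constructor
      · rintro ⟨hx1, hx2⟩
        rcases le_or_gt (botB X) x with hc2 | hc2
        · exact Or.inl ⟨hx1, hc2⟩
        · exact Or.inr ⟨by omega, by omega⟩
      · rintro (⟨hx1, hx2⟩ | ⟨hx1, hx2⟩)
        · exact ⟨hx1, by omega⟩
        · exact ⟨hbm x (by omega), by omega⟩
    have hdisj : Disjoint (X ∩ Set.Ici (botB X)) (Set.Icc (elemSeq X n + 1) (botB X - 1)) := by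
      rw [Set.disjoint_left]
      rintro x ⟨_, hx⟩ hx2
      simp only [Set.mem_Ici] at hx
      simp only [Set.mem_Icc] at hx2
      omega
    rw [hsplit, Set.ncard_union_eq hdisj (inter_Ici_finite hX _) (Set.finite_Icc _ _),
      ncard_Icc_int] at hcount
    unfold chargeB
    omega
  · have hsub : X ∩ Set.Ici (botB X) ⊆ (X ∩ Set.Ioi (elemSeq X n)) ∪ Set.Icc (botB X) (elemSeq X n) := by
      rintro x ⟨hx1, hx2⟩
      simp only [Set.mem_Ici] at hx2
      rcases le_or_gt x (elemSeq X n) with hc | hc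
      · exact Or.inr (by simp only [Set.mem_Icc]; omega)
      · exact Or.inl ⟨hx1, hc⟩
    have hle := Set.ncard_le_ncard hsub
      ((inter_Ioi_finite hX _).union (Set.finite_Icc _ _))
    have hle2 := Set.ncard_union_le (X ∩ Set.Ioi (elemSeq X n)) (Set.Icc (botB X) (elemSeq X n))
    rw [hcount] at hle2
    rw [ncard_Icc_int] at hle2
    unfold chargeB
    omega

lemma partB_int (hX : IsBetaSet X) (n : ℕ) :
    (partB X n : ℤ) = elemSeq X n - chargeB X + n := by
  have := charge_le_elemSeq hX n
  unfold partB
  omega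

lemma mem_iff_charge_part (hX : IsBetaSet X) {x : ℤ} :
    x ∈ X ↔ ∃ n : ℕ, x = chargeB X + (partB X n : ℤ) - n := by
  constructor
  · intro hx
    obtain ⟨n, hn⟩ := elemSeq_surj hX hx
    have := partB_int hX n
    exact ⟨n, by omega⟩
  · rintro ⟨n, rfl⟩
    have h1 := partB_int hX n
    have h2 := elemSeq_mem hX n
    have h3 : chargeB X + (partB X n : ℤ) - n = elemSeq X n := by omega
    rwa [h3]

end Beta

end Stmt3Aux
namespace Stmt3Aux

lemma isBeta_Iic (c : ℤ) : IsBetaSet (Set.Iic c) :=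
  ⟨⟨c, fun z hz => le_of_lt hz⟩, ⟨c + 1, fun z hz hm => by simp only [Set.mem_Iic] at hm; omega⟩⟩

lemma elemSeq_Iic (c : ℤ) (n : ℕ) : elemSeq (Set.Iic c) n = c - n := by
  induction n with
  | zero =>
    show sSup (Set.Iic c) = c - (0 : ℕ)
    rw [int_sSup_eq (Set.mem_Iic.2 le_rfl) fun x hx => hx]
    simp
  | succ n ih =>
    show sSup (Set.Iic c ∩ Set.Iio (elemSeq (Set.Iic c) n)) = _
    rw [ih]
    have hset : Set.Iic c ∩ Set.Iio (c - n) = Set.Iic (c - n - 1) := by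
      ext x
      simp only [Set.mem_inter_iff, Set.mem_Iic, Set.mem_Iio]
      omega
    rw [hset, int_sSup_eq (Set.mem_Iic.2 le_rfl) fun x hx => hx]
    push_cast
    ring

lemma chargeB_Iic (c : ℤ) : chargeB (Set.Iic c) = c := by
  have hb : botB (Set.Iic c) = c + 1 := by
    refine botB_eq (fun x hx => Set.mem_Iic.2 (by omega)) ?_
    simp only [Set.mem_Iic]
    omega
  unfold chargeB
  rw [hb]
  have he : Set.Iic c ∩ Set.Ici (c + 1) = ∅ := by
    ext x
    simp only [Set.mem_inter_iff, Set.mem_Iic, Set.mem_Ici, Set.mem_empty_iff_false, iff_false,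
      not_and, not_le]
    omega
  rw [he]
  simp

lemma partB_Iic (c : ℤ) (n : ℕ) : partB (Set.Iic c) n = 0 := by
  unfold partB
  rw [elemSeq_Iic, chargeB_Iic]
  omega

section Rect
variable (c : ℤ) (w h : ℕ)

lemma isBeta_rect :
    IsBetaSet (Set.Iic (c - h) ∪ Set.Icc (c + w - h + 1) (c + w)) := by
  constructor
  · exact ⟨c - h, fun z hz => Or.inl (by simp only [Set.mem_Iic]; omega)⟩
  · refine ⟨c + w + 1, fun z hz hm => ?_⟩
    rcases hm with hm | hm
    · simp only [Set.mem_Iic] at hm; omega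
    · simp only [Set.mem_Icc] at hm; omega

lemma elemSeq_rect (hw : 1 ≤ w) (hh : 1 ≤ h) (n : ℕ) :
    elemSeq (Set.Iic (c - h) ∪ Set.Icc (c + w - h + 1) (c + w)) n
      = if (n : ℤ) < h then c + w - n else c - n := by
  set E := Set.Iic (c - h) ∪ Set.Icc (c + w - h + 1) (c + w) with hE
  have hmem : ∀ x : ℤ, x ∈ E ↔ (x ≤ c - h ∨ (c + w - h + 1 ≤ x ∧ x ≤ c + w)) := by
    intro x
    simp only [hE, Set.mem_union, Set.mem_Iic, Set.mem_Icc]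
  induction n with
  | zero =>
    rw [if_pos (by push_cast; omega)]
    show sSup E = c + w - (0 : ℕ)
    rw [int_sSup_eq ((hmem (c + w)).2 (by omega)) fun x hx => by rw [hmem] at hx; omega]
    simp
  | succ n ih =>
    show sSup (E ∩ Set.Iio (elemSeq E n)) = _
    rw [ih]
    by_cases h1 : (n : ℤ) + 1 < h
    · rw [if_pos (by omega), if_pos (by push_cast; omega)]
      have hset : E ∩ Set.Iio (c + w - n)
          = Set.Iic (c - h) ∪ Set.Icc (c + w - h + 1) (c + w - n - 1) := by
        ext x
        simp only [Set.mem_inter_iff, Set.mem_Iio, Set.mem_union, Set.mem_Iic, Set.mem_Icc, hmem]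
        omega
      rw [hset, int_sSup_eq (mx := c + w - n - 1) (Or.inr (by simp only [Set.mem_Icc]; omega))
        fun x hx => ?_]
      · push_cast; ring
      · rcases hx with hx | hx
        · simp only [Set.mem_Iic] at hx; omega
        · simp only [Set.mem_Icc] at hx; omega
    · by_cases h2 : (n : ℤ) < h
      · rw [if_pos h2, if_neg (by push_cast; omega)]
        have hset : E ∩ Set.Iio (c + w - n) = Set.Iic (c - h) := by
          ext x
          simp only [Set.mem_inter_iff, Set.mem_Iio, Set.mem_Iic, hmem]
          omega
        rw [hset, int_sSup_eq (Set.mem_Iic.2 le_rfl) fun x hx => hx]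
        push_cast
        omega
      · rw [if_neg h2, if_neg (by push_cast; omega)]
        have hset : E ∩ Set.Iio (c - n) = Set.Iic (c - n - 1) := by
          ext x
          simp only [Set.mem_inter_iff, Set.mem_Iio, Set.mem_Iic, hmem]
          omega
        rw [hset, int_sSup_eq (Set.mem_Iic.2 le_rfl) fun x hx => hx]
        push_cast
        ring

lemma chargeB_rect (hw : 1 ≤ w) (hh : 1 ≤ h) :
    chargeB (Set.Iic (c - h) ∪ Set.Icc (c + w - h + 1) (c + w)) = c := by
  set E := Set.Iic (c - h) ∪ Set.Icc (c + w - h + 1) (c + w) with hE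
  have hb : botB E = c - h + 1 := by
    refine botB_eq (fun x hx => Or.inl (by simp only [Set.mem_Iic]; omega)) ?_
    rintro (hx | hx)
    · simp only [Set.mem_Iic] at hx; omega
    · simp only [Set.mem_Icc] at hx; omega
  unfold chargeB
  rw [hb]
  have hset : E ∩ Set.Ici (c - h + 1) = Set.Icc (c + w - h + 1) (c + w) := by
    ext x
    simp only [hE, Set.mem_inter_iff, Set.mem_union, Set.mem_Iic, Set.mem_Icc, Set.mem_Ici]
    omega
  rw [hset, ncard_Icc_int]
  omega

lemma partB_rect (hw : 1 ≤ w) (hh : 1 ≤ h) (n : ℕ) :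
    partB (Set.Iic (c - h) ∪ Set.Icc (c + w - h + 1) (c + w)) n
      = if n < h then w else 0 := by
  unfold partB
  rw [elemSeq_rect c w h hw hh, chargeB_rect c w h hw hh]
  by_cases hn : n < h
  · rw [if_pos (by push_cast; omega), if_pos hn]
    omega
  · rw [if_neg (by push_cast; omega), if_neg hn]
    omega

end Rect

lemma dc_filter (n : ℤ) (hn : 0 ≤ n) (P : ℤ → Prop) [DecidablePred P]
    (hdc : ∀ i j : ℤ, 1 ≤ i → i ≤ j → j ≤ n → P j → P i) :
    ∃ p : ℤ, 0 ≤ p ∧ p ≤ n ∧ (∀ i, 1 ≤ i → i ≤ n → (P i ↔ i ≤ p)) ∧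
      ((Finset.Icc 1 n).filter P).card = p.toNat := by
  classical
  rcases Finset.eq_empty_or_nonempty ((Finset.Icc 1 n).filter P) with hFe | hFne
  · refine ⟨0, le_rfl, hn, fun i h1 h2 => ?_, by rw [hFe]; simp⟩
    constructor
    · intro hPi
      exact absurd (Finset.mem_filter.2 ⟨Finset.mem_Icc.2 ⟨h1, h2⟩, hPi⟩)
        (by rw [hFe]; simp)
    · omega
  · set F := (Finset.Icc 1 n).filter P with hF
    set p := F.max' hFne with hp
    have hpm : p ∈ F := F.max'_mem hFne
    rw [hF, Finset.mem_filter, Finset.mem_Icc] at hpm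
    refine ⟨p, by omega, hpm.1.2, fun i h1 h2 => ?_, ?_⟩
    · constructor
      · intro hPi
        exact Finset.le_max' F i (Finset.mem_filter.2 ⟨Finset.mem_Icc.2 ⟨h1, h2⟩, hPi⟩)
      · intro hip
        exact hdc i p h1 hip hpm.1.2 hpm.2
    · have hFI : F = Finset.Icc 1 p := by
        ext x
        rw [hF, Finset.mem_filter, Finset.mem_Icc, Finset.mem_Icc]
        constructor
        · rintro ⟨⟨hx1, hx2⟩, hPx⟩
          exact ⟨hx1, Finset.le_max' F x (Finset.mem_filter.2 ⟨Finset.mem_Icc.2 ⟨hx1, hx2⟩, hPx⟩)⟩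
        · rintro ⟨hx1, hx2⟩
          exact ⟨⟨hx1, by omega⟩, hdc x p hx1 hx2 hpm.1.2 hpm.2⟩
      rw [hFI, Int.card_Icc]
      omega

end Stmt3Aux
namespace Stmt3Aux

lemma key (d : ℤ) (hd : 2 ≤ d) (R L : Set ℤ) (hR : IsBetaSet R) (hL : IsBetaSet L)
    (M m : ℤ)
    (hbR : ∀ x : ℤ, x < M - d / 2 + 1 → x ∈ R) (htR : ∀ x ∈ R, x ≤ M)
    (hbL : ∀ x : ℤ, x < m - d / 2 + 1 → x ∈ L) (htL : ∀ x ∈ L, x ≤ m)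
    (w h : ℕ) (W : ℤ → UD)
    (hW : ∀ i : ℤ, W i = if (M - d / 2 + i) ∈ R then
        (if m - d / 2 + i ∈ L then UD.cross else UD.up)
      else (if m - d / 2 + i ∈ L then UD.dn else UD.circ))
    (hw : w = countUD d W UD.up) (hh : h = countUD d W UD.dn) :
    SortedUD d W ↔ ((∀ j, partB R j = 0) ∧ (∀ j, partB L j = if j < h then w else 0) ∧
      chargeB R = chargeB L + (w : ℤ) - (h : ℤ) + (M - m)) := by
  have hdd : 1 ≤ d / 2 := by omega
  constructor
  · intro hs
    obtain ⟨q0, hq0a, hq0b, hq0, -⟩ := dc_filter (d / 2) (by omega)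
      (fun i => udIdx (W i) ≤ 0)
      (fun i j h1 h2 h3 hPj => le_trans (hs i j h1 h2 h3) hPj)
    obtain ⟨q1, hq1a, hq1b, hq1, -⟩ := dc_filter (d / 2) (by omega)
      (fun i => udIdx (W i) ≤ 1)
      (fun i j h1 h2 h3 hPj => le_trans (hs i j h1 h2 h3) hPj)
    obtain ⟨q2, hq2a, hq2b, hq2, -⟩ := dc_filter (d / 2) (by omega)
      (fun i => udIdx (W i) ≤ 2)
      (fun i j h1 h2 h3 hPj => le_trans (hs i j h1 h2 h3) hPj)
    have hq01 : q0 ≤ q1 := by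
      rcases le_or_gt q0 0 with hc | hc
      · omega
      · have h1 : udIdx (W q0) ≤ 0 := (hq0 q0 (by omega) (by omega)).2 le_rfl
        have h2 := (hq1 q0 (by omega) (by omega)).1 (by omega)
        omega
    have hq12 : q1 ≤ q2 := by
      rcases le_or_gt q1 0 with hc | hc
      · omega
      · have h1 : udIdx (W q1) ≤ 1 := (hq1 q1 (by omega) (by omega)).2 le_rfl
        have h2 := (hq2 q1 (by omega) (by omega)).1 (by omega)
        omega
    have hmemR : ∀ i : ℤ, ((M - d / 2 + i) ∈ R) ↔ (W i = UD.cross ∨ W i = UD.up) := by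
      intro i
      rw [hW i]
      split_ifs with hA hB hB <;> simp [*]
    have hmemL : ∀ i : ℤ, ((m - d / 2 + i) ∈ L) ↔ (W i = UD.cross ∨ W i = UD.dn) := by
      intro i
      rw [hW i]
      split_ifs with hA hB hB <;> simp [*]
    have hcR : ∀ i : ℤ, 1 ≤ i → i ≤ d / 2 → ((M - d / 2 + i) ∈ R ↔ i ≤ q1) := by
      intro i h1 h2
      rw [hmemR i]
      have e1 := hq1 i h1 h2
      cases hu : W i <;> rw [hu] at e1 <;> simp [udIdx] at e1 ⊢ <;> omega
    have hcL : ∀ i : ℤ, 1 ≤ i → i ≤ d / 2 →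
        ((m - d / 2 + i) ∈ L ↔ (i ≤ q0 ∨ (q1 < i ∧ i ≤ q2))) := by
      intro i h1 h2
      rw [hmemL i]
      have e0 := hq0 i h1 h2
      have e1 := hq1 i h1 h2
      have e2 := hq2 i h1 h2
      cases hu : W i <;> rw [hu] at e0 e1 e2 <;> simp [udIdx] at e0 e1 e2 ⊢ <;> omega
    have hwcount : (w : ℤ) = q1 - q0 := by
      have hfe : ((Finset.Icc 1 (d / 2)).filter fun i => W i = UD.up)
          = Finset.Icc (q0 + 1) q1 := by
        ext i
        simp only [Finset.mem_filter, Finset.mem_Icc]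
        constructor
        · rintro ⟨⟨h1, h2⟩, hup⟩
          have e0 := hq0 i h1 h2
          have e1 := hq1 i h1 h2
          rw [hup] at e0 e1
          simp [udIdx] at e0 e1
          omega
        · rintro ⟨h1, h2⟩
          have h1' : (1 : ℤ) ≤ i := by omega
          have h2' : i ≤ d / 2 := by omega
          refine ⟨⟨h1', h2'⟩, ?_⟩
          have e0 := hq0 i h1' h2'
          have e1 := hq1 i h1' h2'
          cases hu : W i
          case up => rfl
          all_goals rw [hu] at e0 e1
          all_goals simp [udIdx] at e0 e1
          all_goals omega
      rw [hw]
      unfold countUD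
      rw [hfe, Int.card_Icc]
      omega
    have hhcount : (h : ℤ) = q2 - q1 := by
      have hfe : ((Finset.Icc 1 (d / 2)).filter fun i => W i = UD.dn)
          = Finset.Icc (q1 + 1) q2 := by
        ext i
        simp only [Finset.mem_filter, Finset.mem_Icc]
        constructor
        · rintro ⟨⟨h1, h2⟩, hup⟩
          have e1 := hq1 i h1 h2
          have e2 := hq2 i h1 h2
          rw [hup] at e1 e2
          simp [udIdx] at e1 e2
          omega
        · rintro ⟨h1, h2⟩
          have h1' : (1 : ℤ) ≤ i := by omega
          have h2' : i ≤ d / 2 := by omega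
          refine ⟨⟨h1', h2'⟩, ?_⟩
          have e1 := hq1 i h1' h2'
          have e2 := hq2 i h1' h2'
          cases hu : W i
          case dn => rfl
          all_goals rw [hu] at e1 e2
          all_goals simp [udIdx] at e1 e2
          all_goals omega
      rw [hh]
      unfold countUD
      rw [hfe, Int.card_Icc]
      omega
    have hRiic : R = Set.Iic (M - d / 2 + q1) := by
      ext x
      simp only [Set.mem_Iic]
      rcases lt_or_ge x (M - d / 2 + 1) with hx1 | hx1
      · exact iff_of_true (hbR x hx1) (by omega)
      · rcases lt_or_ge M x with hx2 | hx2
        · exact iff_of_false (fun hmem => by have := htR x hmem; omega) (by omega)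
        · have hi := hcR (x - M + d / 2) (by omega) (by omega)
          rw [show M - d / 2 + (x - M + d / 2) = x by ring] at hi
          rw [hi]
          omega
    have hLuni : L = Set.Iic (m - d / 2 + q0)
        ∪ Set.Icc (m - d / 2 + q1 + 1) (m - d / 2 + q2) := by
      ext x
      simp only [Set.mem_union, Set.mem_Iic, Set.mem_Icc]
      rcases lt_or_ge x (m - d / 2 + 1) with hx1 | hx1
      · exact iff_of_true (hbL x hx1) (by omega)
      · rcases lt_or_ge m x with hx2 | hx2
        · exact iff_of_false (fun hmem => by have := htL x hmem; omega) (by omega)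
        · have hi := hcL (x - m + d / 2) (by omega) (by omega)
          rw [show m - d / 2 + (x - m + d / 2) = x by ring] at hi
          rw [hi]
          omega
    have hLfact : chargeB L = m - d / 2 + q0 + h ∧
        ∀ j : ℕ, partB L j = if j < h then w else 0 := by
      rcases Nat.eq_zero_or_pos w with hw0 | hw0
      · have hset : L = Set.Iic (m - d / 2 + q2) := by
          rw [hLuni]
          ext x
          simp only [Set.mem_union, Set.mem_Iic, Set.mem_Icc]
          omega
        constructor
        · rw [hset, chargeB_Iic]; omega
        · intro j
          rw [hset, partB_Iic]
          rcases Nat.lt_or_ge j h with hj | hj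
          · rw [if_pos hj]; omega
          · rw [if_neg (by omega)]
      · rcases Nat.eq_zero_or_pos h with hh0 | hh0
        ·
          have hset : L = Set.Iic (m - d / 2 + q0) := by
            rw [hLuni]
            ext x
            simp only [Set.mem_union, Set.mem_Iic, Set.mem_Icc]
            omega
          constructor
          · rw [hset, chargeB_Iic]; omega
          · intro j
            rw [hset, partB_Iic, if_neg (by omega)]
        ·
          have hset : L = Set.Iic ((m - d / 2 + q0 + (h : ℤ)) - (h : ℕ)) ∪
              Set.Icc ((m - d / 2 + q0 + (h : ℤ)) + (w : ℕ) - (h : ℕ) + 1)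
                ((m - d / 2 + q0 + (h : ℤ)) + (w : ℕ)) := by
            rw [hLuni]
            ext x
            simp only [Set.mem_union, Set.mem_Iic, Set.mem_Icc]
            omega
          constructor
          · rw [hset, chargeB_rect (m - d / 2 + q0 + (h : ℤ)) w h hw0 hh0]
          · intro j
            rw [hset, partB_rect (m - d / 2 + q0 + (h : ℤ)) w h hw0 hh0]
    refine ⟨?_, hLfact.2, ?_⟩
    · intro j
      rw [hRiic, partB_Iic]
    · rw [hRiic, chargeB_Iic, hLfact.1]
      omega
  · rintro ⟨hpR, hpL, hch⟩
    have hRset : R = Set.Iic (chargeB R) := by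
      ext x
      rw [mem_iff_charge_part hR]
      simp only [Set.mem_Iic]
      constructor
      · rintro ⟨n, rfl⟩
        have := hpR n
        omega
      · intro hx
        refine ⟨(chargeB R - x).toNat, ?_⟩
        have := hpR (chargeB R - x).toNat
        omega
    have hLset : L = Set.Iic (chargeB L - h) ∪
        Set.Icc (chargeB L + w - h + 1) (chargeB L + w) := by
      ext x
      rw [mem_iff_charge_part hL]
      simp only [Set.mem_union, Set.mem_Iic, Set.mem_Icc]
      constructor
      · rintro ⟨n, rfl⟩
        have := hpL n
        rcases Nat.lt_or_ge n h with hn | hn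
        · rw [if_pos hn] at this
          omega
        · rw [if_neg (by omega)] at this
          omega
      · rintro (hx | ⟨hx1, hx2⟩)
        · refine ⟨(chargeB L - x).toNat, ?_⟩
          have := hpL (chargeB L - x).toNat
          rw [if_neg (by omega)] at this
          omega
        · refine ⟨(chargeB L + w - x).toNat, ?_⟩
          have := hpL (chargeB L + w - x).toNat
          rw [if_pos (by omega)] at this
          omega
    intro i j h1 h2 h3
    rw [hW i, hW j, hRset, hLset]
    simp only [Set.mem_Iic, Set.mem_union, Set.mem_Icc]
    split_ifs <;> simp only [udIdx] <;> omega

end Stmt3Aux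

/-- For a `d`-small symbol `Θ = (X₁,X₂)` with defining intervals,
with `w` the number of `∧`'s and `h` the number of `∨`'s in `w_ud(Θ)`:
`w_ud(Θ) = ×^α ∧^w ∨^h ∘^β` if and only if `λ(X_r) = ∅`, `λ(X_l) = (w^h)` and
`s(X_r) = s(X_l) + w - h + kd + d/2`. -/
theorem stmt3 (d : ℤ) (hd : 2 ≤ d) (hdE : Even d)
    (X₁ X₂ : Set ℤ) (hX₁ : IsBetaSet X₁) (hX₂ : IsBetaSet X₂)
    (a₁ b₁ a₂ b₂ : ℤ) (hsm : IsDSmallWith d X₁ X₂ a₁ b₁ a₂ b₂)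
    (w h : ℕ)
    (hw : w = countUD d (wud d X₁ X₂ b₁ b₂) UD.up)
    (hh : h = countUD d (wud d X₁ X₂ b₁ b₂) UD.dn) :
    SortedUD d (wud d X₁ X₂ b₁ b₂) ↔
      ((∀ j : ℕ, partB (rightSet X₁ X₂ b₁ b₂) j = 0) ∧
       (∀ j : ℕ, partB (leftSet X₁ X₂ b₁ b₂) j = if j < h then w else 0) ∧
       chargeB (rightSet X₁ X₂ b₁ b₂) =
         chargeB (leftSet X₁ X₂ b₁ b₂) + (w : ℤ) - (h : ℤ) + middleLen d b₁ b₂ + d / 2) := by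
  classical
  have htX₁ : ∀ x ∈ X₁, x ≤ b₁ := fun x hx =>
    le_trans (le_csSup (Stmt3Aux.beta_bdd hX₁) hx) hsm.top₁
  have htX₂ : ∀ x ∈ X₂, x ≤ b₂ := fun x hx =>
    le_trans (le_csSup (Stmt3Aux.beta_bdd hX₂) hx) hsm.top₂
  have hbX₁ : ∀ x : ℤ, x < b₁ - d / 2 + 1 → x ∈ X₁ := fun x hx =>
    Stmt3Aux.botB_spec hX₁ x (by have h1 := hsm.bot₁; have h2 := hsm.len₁; omega)
  have hbX₂ : ∀ x : ℤ, x < b₂ - d / 2 + 1 → x ∈ X₂ := fun x hx =>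
    Stmt3Aux.botB_spec hX₂ x (by have h1 := hsm.bot₂; have h2 := hsm.len₂; omega)
  rcases lt_or_ge b₁ b₂ with hb | hb
  · have hrs : rightSet X₁ X₂ b₁ b₂ = X₂ := if_pos hb
    have hls : leftSet X₁ X₂ b₁ b₂ = X₁ := if_pos hb
    have habs : |b₂ - b₁| = b₂ - b₁ := abs_of_pos (by omega)
    have hmax : max b₁ b₂ = b₂ := max_eq_right hb.le
    have hWeq : ∀ i : ℤ, wud d X₁ X₂ b₁ b₂ i =
        if (b₂ - d / 2 + i) ∈ X₂ then
          (if b₁ - d / 2 + i ∈ X₁ then UD.cross else UD.up)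
        else (if b₁ - d / 2 + i ∈ X₁ then UD.dn else UD.circ) := by
      intro i
      unfold wud
      rw [hrs, hls, hmax, habs, show b₂ - d / 2 + i - (b₂ - b₁) = b₁ - d / 2 + i by ring]
    rw [hrs, hls]
    rw [show chargeB X₁ + (w : ℤ) - (h : ℤ) + middleLen d b₁ b₂ + d / 2
        = chargeB X₁ + (w : ℤ) - (h : ℤ) + (b₂ - b₁) by
      simp only [middleLen]; rw [habs]; ring]
    exact Stmt3Aux.key d hd X₂ X₁ hX₂ hX₁ b₂ b₁ hbX₂ htX₂ hbX₁ htX₁ w h _ hWeq hw hh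
  · have hrs : rightSet X₁ X₂ b₁ b₂ = X₁ := if_neg (not_lt.2 hb)
    have hls : leftSet X₁ X₂ b₁ b₂ = X₂ := if_neg (not_lt.2 hb)
    have habs : |b₂ - b₁| = b₁ - b₂ := by rw [abs_of_nonpos (by omega)]; ring
    have hmax : max b₁ b₂ = b₁ := max_eq_left hb
    have hWeq : ∀ i : ℤ, wud d X₁ X₂ b₁ b₂ i =
        if (b₁ - d / 2 + i) ∈ X₁ then
          (if b₂ - d / 2 + i ∈ X₂ then UD.cross else UD.up)
        else (if b₂ - d / 2 + i ∈ X₂ then UD.dn else UD.circ) := by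
      intro i
      unfold wud
      rw [hrs, hls, hmax, habs, show b₁ - d / 2 + i - (b₁ - b₂) = b₂ - d / 2 + i by ring]
    rw [hrs, hls]
    rw [show chargeB X₂ + (w : ℤ) - (h : ℤ) + middleLen d b₁ b₂ + d / 2
        = chargeB X₂ + (w : ℤ) - (h : ℤ) + (b₁ - b₂) by
      simp only [middleLen]; rw [habs]; ring]
    exact Stmt3Aux.key d hd X₁ X₂ hX₁ hX₂ b₁ b₂ hbX₁ htX₁ hbX₂ htX₂ w h _ hWeq hw hh
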